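/- arXiv:2108.04734 — 4 statements merged into one kernel-verified Lean document; each statement's English description precedes it below -/
import Mathlib

section
/- Suppose the LP min{cᵀx : Ax = b, x ≥ 0} has nonempty feasible region P, outer radius R (‖x‖₂ ≤ R for all x ∈ P), ‖c‖_∞ ≤ L, and A has full row rank. Let R̄ ≥ 10R and t ≥ 8LR̄, and define x_c⁺, x_∘, x_c⁻, c̃, b̃ as in the modified LP. Then the primal point (x_c⁺, x_c⁻, R̄) lies in P_{R̄,t} with all coordinates strictly positive, the dual point (s⁺, s⁻, s^θ) = (t/x_c⁺, t/x_c⁻, t/R̄) lies in D_{R̄,t} (witnessed by y = 0 and λ = −t/R̄) with all coordinates strictly positive, and the componentwise product of the primal and dual points equals t in every coordinate; that is, (x_c⁺, x_c⁻, R̄) is on the central path of the modified LP at parameter t. -/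
open Matrix

/-- The explicit point `(x_c⁺, x_c⁻, R̄)` is on the central path of the modified LP at
parameter `t`: it lies in `P_{R̄,t}` with strictly positive coordinates, the point
`(t/x_c⁺, t/x_c⁻, t/R̄)` lies in `D_{R̄,t}` (witnessed by `y = 0`, `λ = −t/R̄`) with
strictly positive coordinates, and all componentwise primal-dual products equal `t`. -/
theorem modified_LP_central_path_point {d n : ℕ}
    (A : Matrix (Fin d) (Fin n) ℝ) (b : Fin d → ℝ) (c : Fin n → ℝ)
    (R L Rb t : ℝ)
    (hA : A.rank = d)
    (hP : ∃ x : Fin n → ℝ, A.mulVec x = b ∧ ∀ i, 0 ≤ x i)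
    (hR : ∀ x : Fin n → ℝ, A.mulVec x = b → (∀ i, 0 ≤ x i) →
      Real.sqrt (∑ i, (x i) ^ 2) ≤ R)
    (hc : ∀ i, |c i| ≤ L)
    (hRb : 10 * R ≤ Rb) (hRbpos : 0 < Rb)
    (ht : 8 * L * Rb ≤ t) (htpos : 0 < t)
    (xcp : Fin n → ℝ) (hxcp : xcp = fun i => t / (c i + t / Rb))
    (xo : Fin n → ℝ) (hxo : xo = Aᵀ.mulVec ((A * Aᵀ)⁻¹.mulVec b))
    (xcm : Fin n → ℝ) (hxcm : xcm = xcp - xo)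
    (ctilde : Fin n → ℝ) (hct : ctilde = fun i => t / xcm i)
    (btilde : ℝ) (hbt : btilde = (∑ i, xcp i) + Rb) :
    -- the primal point is strictly positive and lies in P_{R̄,t}
    (∀ i, 0 < xcp i) ∧ (∀ i, 0 < xcm i) ∧ 0 < Rb ∧
    A.mulVec (xcp - xcm) = b ∧ (∑ i, xcp i) + Rb = btilde ∧
    -- the dual point is strictly positive and lies in D_{R̄,t}, with y = 0, λ = −t/R̄
    (∀ i, 0 < t / xcp i) ∧ (∀ i, 0 < t / xcm i) ∧ 0 < t / Rb ∧
    (∀ i, Aᵀ.mulVec 0 i + (-(t / Rb)) + t / xcp i = c i) ∧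
    (∀ i, -(Aᵀ.mulVec 0 i) + t / xcm i = ctilde i) ∧
    (-(t / Rb) + t / Rb = 0) ∧
    -- all componentwise primal-dual products equal t
    (∀ i, xcp i * (t / xcp i) = t) ∧ (∀ i, xcm i * (t / xcm i) = t) ∧
    Rb * (t / Rb) = t := by
  obtain ⟨x0, hx0A, hx0n⟩ := hP
  have hRnn : 0 ≤ R := le_trans (Real.sqrt_nonneg _) (hR x0 hx0A hx0n)
  have hs : 0 < t / Rb := div_pos htpos hRbpos
  have h8L : 8 * L ≤ t / Rb := (le_div_iff₀ hRbpos).2 (by linarith)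
  -- bounds on the denominator c i + t/Rb and on xcp
  have hDpos : ∀ i, 0 < c i + t / Rb := fun i => by
    have := abs_le.1 (hc i); linarith
  have hxcp_pos : ∀ i, 0 < xcp i := fun i => by
    rw [hxcp]; exact div_pos htpos (hDpos i)
  have hxcp_lb : ∀ i, 8 / 9 * Rb ≤ xcp i := fun i => by
    have h1 := abs_le.1 (hc i)
    have hD : c i + t / Rb ≤ 9 / 8 * (t / Rb) := by linarith
    have h2 : t / (9 / 8 * (t / Rb)) ≤ t / (c i + t / Rb) :=
      div_le_div_of_nonneg_left htpos.le (hDpos i) hD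
    have h3 : t / (9 / 8 * (t / Rb)) = 8 / 9 * Rb := by
      field_simp
    rw [hxcp]; dsimp only; rw [← h3]; exact h2
  -- invertibility of A * Aᵀ
  have hrk : (A * Aᵀ).rank = d := by rw [Matrix.rank_self_mul_transpose, hA]
  have hUnit : IsUnit (A * Aᵀ) := by
    rw [← Matrix.mulVec_surjective_iff_isUnit]
    have htop : LinearMap.range (A * Aᵀ).mulVecLin = ⊤ := by
      apply Submodule.eq_top_of_finrank_eq
      rw [← Matrix.rank, hrk]
      simp [Module.finrank_fintype_fun_eq_card]
    intro v
    obtain ⟨w, hw⟩ := LinearMap.range_eq_top.1 htop v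
    exact ⟨w, hw⟩
  have hdet : IsUnit (A * Aᵀ).det := (Matrix.isUnit_iff_isUnit_det _).1 hUnit
  have hAxo : A.mulVec xo = b := by
    rw [hxo, Matrix.mulVec_mulVec, Matrix.mulVec_mulVec, Matrix.mul_nonsing_inv _ hdet,
      Matrix.one_mulVec]
  -- orthogonality and minimum-norm property
  have hdot : ∑ i, xo i * (x0 i - xo i) = 0 := by
    have h1 : A.mulVec (x0 - xo) = 0 := by
      rw [Matrix.mulVec_sub, hx0A, hAxo, sub_self]
    have h2 : xo ⬝ᵥ (x0 - xo) = ((A * Aᵀ)⁻¹.mulVec b) ⬝ᵥ A.mulVec (x0 - xo) := by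
      rw [hxo, Matrix.mulVec_transpose, Matrix.dotProduct_mulVec]
    have h3 : xo ⬝ᵥ (x0 - xo) = 0 := by rw [h2, h1, dotProduct_zero]
    simpa [dotProduct] using h3
  have hX0 : ∑ i, x0 i ^ 2 ≤ R ^ 2 := by
    have h1 := hR x0 hx0A hx0n
    have nn : 0 ≤ ∑ i, x0 i ^ 2 := Finset.sum_nonneg fun i _ => sq_nonneg _
    calc ∑ i, x0 i ^ 2 = Real.sqrt (∑ i, x0 i ^ 2) ^ 2 := (Real.sq_sqrt nn).symm
      _ ≤ R ^ 2 := pow_le_pow_left₀ (Real.sqrt_nonneg _) h1 2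
  have key : ∑ i, x0 i ^ 2 =
      (∑ i, xo i ^ 2) + 2 * (∑ i, xo i * (x0 i - xo i)) + ∑ i, (x0 i - xo i) ^ 2 := by
    rw [Finset.mul_sum, ← Finset.sum_add_distrib, ← Finset.sum_add_distrib]
    exact Finset.sum_congr rfl fun i _ => by ring
  have hxole : ∑ i, xo i ^ 2 ≤ R ^ 2 := by
    have nn : 0 ≤ ∑ i, (x0 i - xo i) ^ 2 := Finset.sum_nonneg fun i _ => sq_nonneg _
    linarith [key, hdot, hX0]
  have hxoi : ∀ i, |xo i| ≤ R := fun i => by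
    have h1 : xo i ^ 2 ≤ R ^ 2 :=
      le_trans (Finset.single_le_sum (f := fun i => xo i ^ 2)
        (fun j _ => sq_nonneg _) (Finset.mem_univ i)) hxole
    calc |xo i| = Real.sqrt (xo i ^ 2) := (Real.sqrt_sq_eq_abs _).symm
      _ ≤ Real.sqrt (R ^ 2) := Real.sqrt_le_sqrt h1
      _ = R := Real.sqrt_sq hRnn
  have hxcm_pos : ∀ i, 0 < xcm i := fun i => by
    have h1 := hxcp_lb i
    have h2 := (abs_le.1 (hxoi i)).2
    rw [hxcm]
    simp only [Pi.sub_apply]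
    linarith
  -- t / xcp i recovers the denominator
  have htxcp : ∀ i, t / xcp i = c i + t / Rb := fun i => by
    rw [hxcp]
    dsimp only
    rw [div_div_eq_mul_div, mul_comm, mul_div_assoc, div_self htpos.ne', mul_one]
  refine ⟨hxcp_pos, hxcm_pos, hRbpos, ?_, hbt.symm, ?_, ?_, hs, ?_, ?_, by ring, ?_, ?_, ?_⟩
  · have : xcp - xcm = xo := by rw [hxcm]; abel
    rw [this, hAxo]
  · exact fun i => div_pos htpos (hxcp_pos i)
  · exact fun i => div_pos htpos (hxcm_pos i)
  · intro i
    rw [Matrix.mulVec_zero, htxcp i]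
    simp
  · intro i
    rw [Matrix.mulVec_zero, hct]
    simp
  · exact fun i => mul_div_cancel₀ t (hxcp_pos i).ne'
  · exact fun i => mul_div_cancel₀ t (hxcm_pos i).ne'
  · exact mul_div_cancel₀ t hRbpos.ne'
end

section
/- Suppose the LP min{cᵀx : Ax = b, x ≥ 0} has inner radius r > 0 (there exists v ∈ P with v_i ≥ r for all i), outer radius R (‖x‖₂ ≤ R for all x ∈ P), ‖c‖_∞ ≤ L with L > 0, and A has full row rank. Let R̄ ≥ 10R and t ≥ 8LR̄, and consider the modified LP. Suppose (x⁺, x⁻, x^θ) ∈ P_{R̄,t} and (s⁺, s⁻, s^θ) ∈ D_{R̄,t} are strictly positive componentwise and every componentwise product lies in [5LR/6, 7LR/6], i.e. x_i⁺ s_i⁺, x_i⁻ s_i⁻ ∈ [5LR/6, 7LR/6] for all i and x^θ s^θ ∈ [5LR/6, 7LR/6]. Then min_i x_i⁺ ≥ Rr/(10 n R̄) and max_i x_i⁻ ≤ (20 n L R̄/t)·R̄. -/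
open Matrix

set_option maxHeartbeats 1000000


lemma sum_transpose_mulVec {d n : ℕ} (A : Matrix (Fin d) (Fin n) ℝ) (y : Fin d → ℝ) (x : Fin n → ℝ) :
    ∑ i, Aᵀ.mulVec y i * x i = ∑ j, y j * A.mulVec x j := by
  simp only [Matrix.mulVec, dotProduct, Matrix.transpose_apply, Finset.sum_mul,
    Finset.mul_sum]
  rw [Finset.sum_comm]
  exact Finset.sum_congr rfl fun j _ => Finset.sum_congr rfl fun i _ => by ring

lemma isUnit_AAT {d n : ℕ} (A : Matrix (Fin d) (Fin n) ℝ) (hA : A.rank = d) :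
    IsUnit (A * Aᵀ) := by
  rw [← Matrix.mulVec_surjective_iff_isUnit]
  have hrank : (A * Aᵀ).rank = d := by rw [Matrix.rank_self_mul_transpose, hA]
  have htop : LinearMap.range (A * Aᵀ).mulVecLin = ⊤ := by
    apply Submodule.eq_top_of_finrank_eq
    rw [← Matrix.rank, hrank]
    simp [Module.finrank_pi]
  exact fun z => LinearMap.range_eq_top.mp htop z



/-- For strictly positive primal-dual points of the modified LP whose componentwise
products all lie in `[5LR/6, 7LR/6]`, we have `min_i x_i⁺ ≥ Rr/(10nR̄)` and
`max_i x_i⁻ ≤ (20nLR̄/t)·R̄`. -/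
theorem modified_LP_distance_bounds {d n : ℕ}
    (A : Matrix (Fin d) (Fin n) ℝ) (b : Fin d → ℝ) (c : Fin n → ℝ)
    (r R L Rb t : ℝ)
    (hA : A.rank = d)
    (hr : 0 < r)
    (hinner : ∃ v : Fin n → ℝ, A.mulVec v = b ∧ ∀ i, r ≤ v i)
    (hR : ∀ x : Fin n → ℝ, A.mulVec x = b → (∀ i, 0 ≤ x i) →
      Real.sqrt (∑ i, (x i) ^ 2) ≤ R)
    (hc : ∀ i, |c i| ≤ L) (hL : 0 < L)
    (hRb : 10 * R ≤ Rb) (hRbpos : 0 < Rb)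
    (ht : 8 * L * Rb ≤ t) (htpos : 0 < t)
    -- data of the modified LP
    (xcp : Fin n → ℝ) (hxcp : xcp = fun i => t / (c i + t / Rb))
    (xo : Fin n → ℝ) (hxo : xo = Aᵀ.mulVec ((A * Aᵀ)⁻¹.mulVec b))
    (xcm : Fin n → ℝ) (hxcm : xcm = xcp - xo)
    (ctilde : Fin n → ℝ) (hct : ctilde = fun i => t / xcm i)
    (btilde : ℝ) (hbt : btilde = (∑ i, xcp i) + Rb)
    -- a strictly positive primal point of the modified LP
    (xp xm : Fin n → ℝ) (xθ : ℝ)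
    (hxpos : (∀ i, 0 < xp i) ∧ (∀ i, 0 < xm i) ∧ 0 < xθ)
    (hPmem : A.mulVec (xp - xm) = b ∧ (∑ i, xp i) + xθ = btilde)
    -- a strictly positive dual point of the modified LP
    (sp sm : Fin n → ℝ) (sθ : ℝ)
    (hspos : (∀ i, 0 < sp i) ∧ (∀ i, 0 < sm i) ∧ 0 < sθ)
    (hDmem : ∃ (y : Fin d → ℝ) (lam : ℝ),
      (∀ i, Aᵀ.mulVec y i + lam + sp i = c i) ∧
      (∀ i, -(Aᵀ.mulVec y i) + sm i = ctilde i) ∧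
      lam + sθ = 0)
    -- all componentwise primal-dual products lie in [5LR/6, 7LR/6]
    (hprod : (∀ i, 5 * L * R / 6 ≤ xp i * sp i ∧ xp i * sp i ≤ 7 * L * R / 6) ∧
             (∀ i, 5 * L * R / 6 ≤ xm i * sm i ∧ xm i * sm i ≤ 7 * L * R / 6) ∧
             (5 * L * R / 6 ≤ xθ * sθ ∧ xθ * sθ ≤ 7 * L * R / 6)) :
    (∀ i, R * r / (10 * n * Rb) ≤ xp i) ∧
    (∀ i, xm i ≤ 20 * n * L * Rb / t * Rb) := by
  obtain ⟨v, hv, hvr⟩ := hinner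
  obtain ⟨hxp_pos, hxm_pos, hxθ_pos⟩ := hxpos
  obtain ⟨hsp_pos, hsm_pos, hsθ_pos⟩ := hspos
  obtain ⟨hAx, hsum⟩ := hPmem
  obtain ⟨y, lam, hdp, hdm, hdθ⟩ := hDmem
  obtain ⟨hpp, hpm, hpθ⟩ := hprod
  rcases Nat.eq_zero_or_pos n with hn0 | hn0
  · subst hn0; exact ⟨fun i => i.elim0, fun i => i.elim0⟩
  have hn1 : (1 : ℝ) ≤ (n : ℝ) := by exact_mod_cast hn0
  have hnn : (0 : ℝ) ≤ (n : ℝ) := by linarith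
  have i0 : Fin n := ⟨0, hn0⟩
  -- facts about v
  have hv0 : ∀ i, 0 ≤ v i := fun i => le_trans hr.le (hvr i)
  have hvnorm := hR v hv hv0
  have hR0 : 0 ≤ R := le_trans (Real.sqrt_nonneg _) hvnorm
  have hvsq : ∑ i, v i ^ 2 ≤ R ^ 2 := by
    have h0 : 0 ≤ ∑ i, v i ^ 2 := Finset.sum_nonneg fun i _ => sq_nonneg _
    calc ∑ i, v i ^ 2 = Real.sqrt (∑ i, v i ^ 2) ^ 2 := (Real.sq_sqrt h0).symm
      _ ≤ R ^ 2 := pow_le_pow_left₀ (Real.sqrt_nonneg _) hvnorm 2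
  have hvR : ∀ i, v i ≤ R := by
    intro i
    have h1 : v i ^ 2 ≤ ∑ j, v j ^ 2 :=
      Finset.single_le_sum (f := fun j => v j ^ 2) (fun j _ => sq_nonneg _) (Finset.mem_univ i)
    calc v i = Real.sqrt (v i ^ 2) := (Real.sqrt_sq (hv0 i)).symm
      _ ≤ Real.sqrt (R ^ 2) := Real.sqrt_le_sqrt (h1.trans hvsq)
      _ = R := Real.sqrt_sq hR0
  have hRpos : 0 < R := lt_of_lt_of_le hr ((hvr i0).trans (hvR i0))
  have hRRb : R ≤ Rb / 10 := by linarith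
  have sum_const_bound : ∀ (f : Fin n → ℝ) (M : ℝ), (∀ i, f i ≤ M) → ∑ i, f i ≤ n * M := by
    intro f M hf
    calc ∑ i, f i ≤ ∑ _i : Fin n, M := Finset.sum_le_sum fun i _ => hf i
      _ = n * M := by simp [Finset.sum_const, Finset.card_univ, nsmul_eq_mul]
  have hsumv_le : ∑ i, v i ≤ n * R := sum_const_bound v R hvR
  -- bounds on xcp
  have hu : 0 < t / Rb := div_pos htpos hRbpos
  have h8L : 8 * L ≤ t / Rb := by rw [le_div_iff₀ hRbpos]; linarith
  have hden : ∀ i, 7 / 8 * (t / Rb) ≤ c i + t / Rb ∧ c i + t / Rb ≤ 9 / 8 * (t / Rb) := by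
    intro i
    have hcl : -L ≤ c i := neg_le_of_abs_le (hc i)
    have hcu : c i ≤ L := (abs_le.mp (hc i)).2
    constructor <;> linarith
  have htu : t = t / Rb * Rb := by field_simp
  have hxcp_lb : ∀ i, 8 * Rb / 9 ≤ xcp i := by
    intro i
    obtain ⟨h1, h2⟩ := hden i
    have hdpos : 0 < c i + t / Rb := by linarith
    rw [hxcp]
    dsimp only
    rw [le_div_iff₀ hdpos]
    nlinarith [mul_le_mul_of_nonneg_left h2 hRbpos.le]
  have hxcp_ub : ∀ i, xcp i ≤ 8 * Rb / 7 := by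
    intro i
    obtain ⟨h1, h2⟩ := hden i
    have hdpos : 0 < c i + t / Rb := by linarith
    rw [hxcp]
    dsimp only
    rw [div_le_iff₀ hdpos]
    nlinarith [mul_le_mul_of_nonneg_left h1 hRbpos.le]
  -- bounds on xo
  have hU : IsUnit (A * Aᵀ) := isUnit_AAT A hA
  have hUdet : IsUnit (A * Aᵀ).det := (Matrix.isUnit_iff_isUnit_det _).mp hU
  set w : Fin d → ℝ := (A * Aᵀ)⁻¹.mulVec b with hw
  have hAxo : A.mulVec xo = b := by
    rw [hxo, Matrix.mulVec_mulVec, Matrix.mulVec_mulVec,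
      Matrix.mul_nonsing_inv _ hUdet, Matrix.one_mulVec]
  have e1 : ∑ i, xo i * xo i = ∑ j, w j * b j := by
    calc ∑ i, xo i * xo i = ∑ i, Aᵀ.mulVec w i * xo i := by rw [← hxo]
      _ = ∑ j, w j * A.mulVec xo j := sum_transpose_mulVec A w xo
      _ = ∑ j, w j * b j := by rw [hAxo]
  have e2 : ∑ i, xo i * v i = ∑ j, w j * b j := by
    calc ∑ i, xo i * v i = ∑ i, Aᵀ.mulVec w i * v i := by rw [← hxo]
      _ = ∑ j, w j * A.mulVec v j := sum_transpose_mulVec A w v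
      _ = ∑ j, w j * b j := by rw [hv]
  have hxx : ∑ i, xo i * xo i = ∑ i, xo i ^ 2 :=
    Finset.sum_congr rfl fun i _ => by ring
  have hCS : (∑ i, xo i * v i) ^ 2 ≤ (∑ i, xo i ^ 2) * (∑ i, v i ^ 2) :=
    Finset.sum_mul_sq_le_sq_mul_sq Finset.univ xo v
  have hSX0 : 0 ≤ ∑ i, xo i ^ 2 := Finset.sum_nonneg fun i _ => sq_nonneg _
  have hxov : ∑ i, xo i * v i = ∑ i, xo i ^ 2 := by
    rw [e2, ← hxx]; exact e1.symm
  have hSX : ∑ i, xo i ^ 2 ≤ R ^ 2 := by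
    have h1 := hCS
    rw [hxov] at h1
    nlinarith [hvsq, sq_nonneg R, hSX0, h1, mul_le_mul_of_nonneg_left hvsq hSX0]
  have hxoR : ∀ i, |xo i| ≤ R := by
    intro i
    have h1 : xo i ^ 2 ≤ ∑ j, xo j ^ 2 :=
      Finset.single_le_sum (f := fun j => xo j ^ 2) (fun j _ => sq_nonneg _) (Finset.mem_univ i)
    calc |xo i| = Real.sqrt (xo i ^ 2) := (Real.sqrt_sq_eq_abs _).symm
      _ ≤ Real.sqrt (R ^ 2) := Real.sqrt_le_sqrt (h1.trans hSX)
      _ = R := Real.sqrt_sq hR0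
  -- bounds on xcm and ctilde
  have hxcm_lb : ∀ i, 71 * Rb / 90 ≤ xcm i := by
    intro i
    have h1 := hxcp_lb i
    have h2 := (abs_le.mp (hxoR i)).2
    rw [hxcm]; simp only [Pi.sub_apply]; linarith
  have hxcm_ub : ∀ i, xcm i ≤ 87 * Rb / 70 := by
    intro i
    have h1 := hxcp_ub i
    have h2 := (abs_le.mp (hxoR i)).1
    rw [hxcm]; simp only [Pi.sub_apply]; linarith
  have hxcm_pos : ∀ i, 0 < xcm i := fun i =>
    lt_of_lt_of_le (by positivity) (hxcm_lb i)
  have hct_pos : ∀ i, 0 < ctilde i := by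
    intro i; rw [hct]; exact div_pos htpos (hxcm_pos i)
  have hct_mul : ∀ i, ctilde i * xcm i = t := by
    intro i; rw [hct]; exact div_mul_cancel₀ t (hxcm_pos i).ne'
  -- btilde bounds
  have hbt_ub : btilde ≤ n * (8 * Rb / 7) + Rb := by
    rw [hbt]
    have := sum_const_bound xcp (8 * Rb / 7) hxcp_ub
    linarith
  have hbt_v : ∑ i, v i ≤ btilde := by
    rw [hbt]
    have h1 : ∑ i, v i ≤ ∑ i, xcp i :=
      Finset.sum_le_sum fun i _ => le_trans (hvR i) (le_trans (by linarith) (hxcp_lb i))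
    linarith
  -- the key identity
  set W : Fin n → ℝ := Aᵀ.mulVec y with hWdef
  have hsp' : ∀ i, sp i = c i - W i - lam := fun i => by have := hdp i; simp only [hWdef]; linarith
  have hsm' : ∀ i, sm i = ctilde i + W i := fun i => by have := hdm i; simp only [hWdef]; linarith
  have hsθ' : sθ = -lam := by linarith
  have hWv : ∑ i, W i * v i = ∑ j, y j * b j := by
    rw [hWdef, sum_transpose_mulVec, hv]
  have hWx : (∑ i, W i * xp i) - (∑ i, W i * xm i) = ∑ j, y j * b j := by
    have h := sum_transpose_mulVec A y (xp - xm)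
    rw [hAx, ← hWdef] at h
    calc (∑ i, W i * xp i) - (∑ i, W i * xm i)
        = ∑ i, (W i * xp i - W i * xm i) := (Finset.sum_sub_distrib ..).symm
      _ = ∑ i, W i * (xp - xm) i :=
        Finset.sum_congr rfl fun i _ => by simp [Pi.sub_apply, mul_sub]
      _ = ∑ j, y j * b j := h
  have Ev : ∑ i, v i * sp i
      = (∑ i, c i * v i) - (∑ j, y j * b j) - lam * ∑ i, v i := by
    calc ∑ i, v i * sp i = ∑ i, (c i * v i - W i * v i - lam * v i) :=
          Finset.sum_congr rfl fun i _ => by rw [hsp' i]; ring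
      _ = (∑ i, c i * v i) - (∑ i, W i * v i) - lam * ∑ i, v i := by
          rw [Finset.sum_sub_distrib, Finset.sum_sub_distrib, ← Finset.mul_sum]
      _ = (∑ i, c i * v i) - (∑ j, y j * b j) - lam * ∑ i, v i := by rw [hWv]
  have Exp : ∑ i, xp i * sp i
      = (∑ i, c i * xp i) - (∑ i, W i * xp i) - lam * ∑ i, xp i := by
    calc ∑ i, xp i * sp i = ∑ i, (c i * xp i - W i * xp i - lam * xp i) :=
          Finset.sum_congr rfl fun i _ => by rw [hsp' i]; ring
      _ = _ := by rw [Finset.sum_sub_distrib, Finset.sum_sub_distrib, ← Finset.mul_sum]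
  have Exm : ∑ i, xm i * sm i
      = (∑ i, xm i * ctilde i) + (∑ i, W i * xm i) := by
    calc ∑ i, xm i * sm i = ∑ i, (xm i * ctilde i + W i * xm i) :=
          Finset.sum_congr rfl fun i _ => by rw [hsm' i]; ring
      _ = _ := Finset.sum_add_distrib
  have I1 : (∑ i, v i * sp i) + (btilde - ∑ i, v i) * sθ + (∑ i, xm i * ctilde i)
      = ((∑ i, xp i * sp i) + (∑ i, xm i * sm i) + xθ * sθ)
        + (∑ i, c i * v i) - (∑ i, c i * xp i) := by
    rw [Ev, Exp, Exm, hsθ']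
    linear_combination hWx + lam * hsum
  -- nonnegativity of the three left-hand terms
  have hT1 : 0 ≤ ∑ i, v i * sp i :=
    Finset.sum_nonneg fun i _ => mul_nonneg (hv0 i) (hsp_pos i).le
  have hT2 : 0 ≤ (btilde - ∑ i, v i) * sθ :=
    mul_nonneg (by linarith) hsθ_pos.le
  have hT3 : 0 ≤ ∑ i, xm i * ctilde i :=
    Finset.sum_nonneg fun i _ => mul_nonneg (hxm_pos i).le (hct_pos i).le
  -- upper bound on the right-hand side
  have hKb : ((∑ i, xp i * sp i) + (∑ i, xm i * sm i) + xθ * sθ)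
      + (∑ i, c i * v i) - (∑ i, c i * xp i) ≤ 25 * n * L * Rb / 3 := by
    have b1 : ∑ i, xp i * sp i ≤ n * (7 * L * R / 6) :=
      sum_const_bound _ _ fun i => (hpp i).2
    have b2 : ∑ i, xm i * sm i ≤ n * (7 * L * R / 6) :=
      sum_const_bound _ _ fun i => (hpm i).2
    have b3 : xθ * sθ ≤ 7 * L * R / 6 := hpθ.2
    have b4 : ∑ i, c i * v i ≤ n * (L * R) := by
      apply sum_const_bound
      intro i
      calc c i * v i ≤ |c i| * v i :=
            mul_le_mul_of_nonneg_right (le_abs_self _) (hv0 i)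
        _ ≤ L * R := mul_le_mul (hc i) (hvR i) (hv0 i) hL.le
    have b5 : -(L * btilde) ≤ ∑ i, c i * xp i := by
      have h1 : ∑ i, (-L) * xp i ≤ ∑ i, c i * xp i :=
        Finset.sum_le_sum fun i _ =>
          mul_le_mul_of_nonneg_right (neg_le_of_abs_le (hc i)) (hxp_pos i).le
      have h2 : ∑ i, (-L) * xp i = -L * ∑ i, xp i := (Finset.mul_sum _ _ _).symm
      have h3 : ∑ i, xp i ≤ btilde := by linarith
      have h4 : -L * btilde ≤ -L * ∑ i, xp i :=
        mul_le_mul_of_nonpos_left h3 (by linarith)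
      linarith
    have b6 : L * btilde ≤ L * (n * (8 * Rb / 7) + Rb) :=
      mul_le_mul_of_nonneg_left hbt_ub hL.le
    have hLR : L * R ≤ L * (Rb / 10) := mul_le_mul_of_nonneg_left hRRb hL.le
    have hnLR : (n : ℝ) * (L * R) ≤ n * (L * (Rb / 10)) :=
      mul_le_mul_of_nonneg_left hLR hnn
    have hnLRb : L * Rb ≤ n * (L * Rb) :=
      le_mul_of_one_le_left (mul_pos hL hRbpos).le hn1
    have h0 : (0 : ℝ) ≤ n * (L * Rb) :=
      mul_nonneg hnn (mul_pos hL hRbpos).le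
    linarith only [b1, b2, b3, b4, b5, b6, hLR, hnLR, hnLRb, h0]
  -- conclusion
  constructor
  · intro i
    have hKi : r * sp i ≤ 25 * n * L * Rb / 3 := by
      have hsingle : v i * sp i ≤ ∑ j, v j * sp j :=
        Finset.single_le_sum (f := fun j => v j * sp j)
          (fun j _ => mul_nonneg (hv0 j) (hsp_pos j).le) (Finset.mem_univ i)
      have hrs : r * sp i ≤ v i * sp i :=
        mul_le_mul_of_nonneg_right (hvr i) (hsp_pos i).le
      linarith only [I1, hKb, hsingle, hrs, hT2, hT3]
    have h10 : (0 : ℝ) < 10 * n * Rb := by positivity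
    rw [div_le_iff₀ h10]
    have hxs := (hpp i).1
    have hm : xp i * (r * sp i) ≤ xp i * (25 * n * L * Rb / 3) :=
      mul_le_mul_of_nonneg_left hKi (hxp_pos i).le
    have hrx : r * (5 * L * R / 6) ≤ r * (xp i * sp i) :=
      mul_le_mul_of_nonneg_left hxs hr.le
    have key : L * (R * r) ≤ L * (xp i * (10 * n * Rb)) := by
      linarith only [hm, hrx]
    exact le_of_mul_le_mul_left key hL
  · intro i
    have hKi2 : xm i * ctilde i ≤ 25 * n * L * Rb / 3 := by
      have hsingle : xm i * ctilde i ≤ ∑ j, xm j * ctilde j :=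
        Finset.single_le_sum (f := fun j => xm j * ctilde j)
          (fun j _ => mul_nonneg (hxm_pos j).le (hct_pos j).le) (Finset.mem_univ i)
      linarith only [I1, hKb, hsingle, hT1, hT2]
    have h25 : (0 : ℝ) ≤ 25 * n * L * Rb / 3 := by
      apply div_nonneg _ (by norm_num)
      exact mul_nonneg (mul_nonneg (mul_nonneg (by norm_num) hnn) hL.le) hRbpos.le
    have hstep : xm i * t ≤ 25 * n * L * Rb / 3 * (87 * Rb / 70) := by
      calc xm i * t = xm i * ctilde i * xcm i := by rw [← hct_mul i]; ring
        _ ≤ 25 * n * L * Rb / 3 * xcm i :=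
            mul_le_mul_of_nonneg_right hKi2 (hxcm_pos i).le
        _ ≤ 25 * n * L * Rb / 3 * (87 * Rb / 70) :=
            mul_le_mul_of_nonneg_left (hxcm_ub i) h25
    have hnn2 : (0 : ℝ) ≤ (n : ℝ) * L * (Rb * Rb) :=
      mul_nonneg (mul_nonneg hnn hL.le) (mul_nonneg hRbpos.le hRbpos.le)
    rw [div_mul_eq_mul_div, le_div_iff₀ htpos]
    linarith only [hstep, hnn2]
end

section
/- Suppose the LP min{cᵀx : Ax = b, x ≥ 0} has inner radius r > 0, outer radius R, ‖c‖₂ ≤ L with L > 0, and A has full row rank. Let 0 < ε ≤ 1/2, R̄ = 5R/ε, and t = 2^16 ε⁻³ n² (R/r)·LR, and consider the modified LP with these parameters. Suppose (x⁺, x⁻, x^θ) ∈ P_{R̄,t} and (s⁺, s⁻, s^θ) ∈ D_{R̄,t} are strictly positive componentwise and every componentwise product x_i⁺ s_i⁺, x_i⁻ s_i⁻, x^θ s^θ lies in [5LR/6, 7LR/6]. Then x⁺ − x⁻ ∈ P and s⁺ − s^θ·1 ∈ D, and moreover x_i⁻ ≤ ε x_i⁺ and s^θ ≤ ε s_i⁺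 for all i. -/
open Matrix

set_option maxHeartbeats 2000000

lemma cs_abs {n : ℕ} (f g : Fin n → ℝ) :
    |∑ i, f i * g i| ≤ Real.sqrt (∑ i, f i ^ 2) * Real.sqrt (∑ i, g i ^ 2) := by
  have h1 := Real.sum_mul_le_sqrt_mul_sqrt Finset.univ f g
  have h2 := Real.sum_mul_le_sqrt_mul_sqrt Finset.univ f (fun i => -g i)
  have e1 : ∑ i, f i * (-g i) = -∑ i, f i * g i := by
    rw [← Finset.sum_neg_distrib]; exact Finset.sum_congr rfl fun i _ => by ring
  have e2 : ∑ i : Fin n, (-g i) ^ 2 = ∑ i, g i ^ 2 :=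
    Finset.sum_congr rfl fun i _ => by ring
  rw [e1, e2] at h2
  rw [abs_le]; exact ⟨by linarith, h1⟩


/-- With `R̄ = 5R/ε` and `t = 2^16 ε⁻³ n² (R/r) LR`, any strictly positive primal-dual
pair of the modified LP whose componentwise products lie in `[5LR/6, 7LR/6]` yields a
feasible pair `(x⁺ − x⁻, s⁺ − s^θ·1) ∈ P × D` of the original LP, with
`x_i⁻ ≤ ε x_i⁺` and `s^θ ≤ ε s_i⁺` for all `i`. -/
theorem modified_LP_recover_feasible {d n : ℕ}
    (A : Matrix (Fin d) (Fin n) ℝ) (b : Fin d → ℝ) (c : Fin n → ℝ)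
    (r R L ε Rb t : ℝ)
    (hA : A.rank = d)
    (hr : 0 < r)
    (hinner : ∃ v : Fin n → ℝ, A.mulVec v = b ∧ ∀ i, r ≤ v i)
    (hR : ∀ x : Fin n → ℝ, A.mulVec x = b → (∀ i, 0 ≤ x i) →
      Real.sqrt (∑ i, (x i) ^ 2) ≤ R)
    (hc : Real.sqrt (∑ i, (c i) ^ 2) ≤ L) (hL : 0 < L)
    (hε0 : 0 < ε) (hε : ε ≤ 1 / 2)
    (hRb : Rb = 5 * R / ε)
    (ht : t = 2 ^ 16 * ε⁻¹ ^ 3 * n ^ 2 * (R / r) * (L * R))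
    -- data of the modified LP
    (xcp : Fin n → ℝ) (hxcp : xcp = fun i => t / (c i + t / Rb))
    (xo : Fin n → ℝ) (hxo : xo = Aᵀ.mulVec ((A * Aᵀ)⁻¹.mulVec b))
    (xcm : Fin n → ℝ) (hxcm : xcm = xcp - xo)
    (ctilde : Fin n → ℝ) (hct : ctilde = fun i => t / xcm i)
    (btilde : ℝ) (hbt : btilde = (∑ i, xcp i) + Rb)
    -- a strictly positive primal point of the modified LP
    (xp xm : Fin n → ℝ) (xθ : ℝ)
    (hxpos : (∀ i, 0 < xp i) ∧ (∀ i, 0 < xm i) ∧ 0 < xθ)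
    (hPmem : A.mulVec (xp - xm) = b ∧ (∑ i, xp i) + xθ = btilde)
    -- a strictly positive dual point of the modified LP
    (sp sm : Fin n → ℝ) (sθ : ℝ)
    (hspos : (∀ i, 0 < sp i) ∧ (∀ i, 0 < sm i) ∧ 0 < sθ)
    (hDmem : ∃ (y : Fin d → ℝ) (lam : ℝ),
      (∀ i, Aᵀ.mulVec y i + lam + sp i = c i) ∧
      (∀ i, -(Aᵀ.mulVec y i) + sm i = ctilde i) ∧
      lam + sθ = 0)
    -- all componentwise primal-dual products lie in [5LR/6, 7LR/6]
    (hprod : (∀ i, 5 * L * R / 6 ≤ xp i * sp i ∧ xp i * sp i ≤ 7 * L * R / 6) ∧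
             (∀ i, 5 * L * R / 6 ≤ xm i * sm i ∧ xm i * sm i ≤ 7 * L * R / 6) ∧
             (5 * L * R / 6 ≤ xθ * sθ ∧ xθ * sθ ≤ 7 * L * R / 6)) :
    -- x⁺ − x⁻ ∈ P
    (A.mulVec (xp - xm) = b ∧ ∀ i, 0 ≤ xp i - xm i) ∧
    -- s⁺ − s^θ·1 ∈ D
    ((∃ y : Fin d → ℝ, ∀ i, Aᵀ.mulVec y i + (sp i - sθ) = c i) ∧
      (∀ i, 0 ≤ sp i - sθ)) ∧
    (∀ i, xm i ≤ ε * xp i) ∧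
    (∀ i, sθ ≤ ε * sp i) := by
  obtain ⟨hxp0, hxm0, hxθ0⟩ := hxpos
  obtain ⟨hsp0, hsm0, hsθ0⟩ := hspos
  obtain ⟨hPb, hPsum⟩ := hPmem
  obtain ⟨hpp, hpm, hpθ⟩ := hprod
  obtain ⟨y, lam, hdp, hdm, hdθ⟩ := hDmem
  obtain ⟨v, hvA, hvr⟩ := hinner
  -- recovered dual feasibility (works for any n)
  have hspi : ∀ i, Aᵀ.mulVec y i + (sp i - sθ) = c i := fun i => by
    have h1 := hdp i; linarith [hdθ]
  rcases Nat.eq_zero_or_pos n with hn0 | hn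
  · subst hn0
    exact ⟨⟨hPb, fun i => i.elim0⟩, ⟨⟨y, hspi⟩, fun i => i.elim0⟩,
      fun i => i.elim0, fun i => i.elim0⟩
  -- ===== basic facts =====
  have hn0R : (0:ℝ) < n := by exact_mod_cast hn
  have hn1 : (1:ℝ) ≤ n := by exact_mod_cast hn
  have hvnn : ∀ i, 0 ≤ v i := fun i => le_trans hr.le (hvr i)
  have hvs : Real.sqrt (∑ i, v i ^ 2) ≤ R := hR v hvA hvnn
  have hviR : ∀ i, v i ≤ R := by
    intro i
    have h1 : v i ^ 2 ≤ ∑ j, v j ^ 2 :=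
      Finset.single_le_sum (fun j _ => sq_nonneg (v j)) (Finset.mem_univ i)
    have h2 := Real.sqrt_le_sqrt h1
    rw [Real.sqrt_sq (hvnn i)] at h2
    exact h2.trans hvs
  have hrR : r ≤ R := le_trans (hvr ⟨0, hn⟩) (hviR ⟨0, hn⟩)
  have hR0 : 0 < R := lt_of_lt_of_le hr hrR
  have hcabs : ∀ i, |c i| ≤ L := by
    intro i
    have h1 : c i ^ 2 ≤ ∑ j, c j ^ 2 :=
      Finset.single_le_sum (fun j _ => sq_nonneg (c j)) (Finset.mem_univ i)
    have h2 := Real.sqrt_le_sqrt h1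
    rw [Real.sqrt_sq_eq_abs] at h2
    exact h2.trans hc
  have ht0 : 0 < t := by
    rw [ht]
    exact mul_pos (mul_pos (mul_pos (mul_pos (by norm_num)
      (pow_pos (inv_pos.mpr hε0) 3)) (pow_pos hn0R 2)) (div_pos hR0 hr)) (mul_pos hL hR0)
  have hRb0 : 0 < Rb := by rw [hRb]; positivity
  have hεRb : ε * Rb = 5 * R := by rw [hRb]; field_simp
  have hRRb : 10 * R ≤ Rb := by nlinarith [mul_le_mul_of_nonneg_right hε hRb0.le]
  have hts : t * ε ^ 3 * r = 2 ^ 16 * (n:ℝ) ^ 2 * L * R ^ 2 := by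
    rw [ht]; field_simp
  have hM0 : 0 < L * R := mul_pos hL hR0
  have hnM0 : 0 < (n:ℝ) * (L * R) := mul_pos hn0R hM0
  have hMnM : L * R ≤ (n:ℝ) * (L * R) := by nlinarith
  -- summation helpers
  have sumle : ∀ (f : Fin n → ℝ) (K : ℝ), (∀ i, f i ≤ K) → (∑ i, f i) ≤ (n:ℝ) * K := by
    intro f K h
    calc (∑ i, f i) ≤ ∑ _i : Fin n, K := Finset.sum_le_sum (fun i _ => h i)
    _ = (n:ℝ) * K := by rw [Finset.sum_const, Finset.card_univ, Fintype.card_fin, nsmul_eq_mul]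
  have sumge : ∀ (f : Fin n → ℝ) (K : ℝ), (∀ i, K ≤ f i) → (n:ℝ) * K ≤ ∑ i, f i := by
    intro f K h
    calc (n:ℝ) * K = ∑ _i : Fin n, K := by
          rw [Finset.sum_const, Finset.card_univ, Fintype.card_fin, nsmul_eq_mul]
    _ ≤ ∑ i, f i := Finset.sum_le_sum (fun i _ => h i)
  -- ===== bound L ≤ (1/4) t/Rb =====
  have h4L : 4 * (L * Rb) ≤ t := by
    have h1 : 4 * (L * Rb) * (ε ^ 3 * r) = 20 * (L * R) * (ε ^ 2 * r) := by
      linear_combination (4 * L * ε ^ 2 * r) * hεRb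
    have hε2 : ε ^ 2 ≤ 1 / 4 := by nlinarith
    have h2 : 20 * (L * R) * (ε ^ 2 * r) ≤ t * (ε ^ 3 * r) := by
      have e2 : t * (ε ^ 3 * r) = 2 ^ 16 * (n:ℝ) ^ 2 * L * R ^ 2 := by linear_combination hts
      have ha : 20 * (L * R) * (ε ^ 2 * r) ≤ 5 * ((L * R) * r) := by
        nlinarith [mul_nonneg (mul_nonneg hM0.le hr.le) (show (0:ℝ) ≤ 1/4 - ε ^ 2 by linarith)]
      have hb : 5 * ((L * R) * r) ≤ 5 * ((L * R) * R) := by nlinarith [hrR, hM0]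
      have hc2 : 5 * ((L * R) * R) ≤ 2 ^ 16 * (n:ℝ) ^ 2 * L * R ^ 2 := by
        nlinarith [mul_nonneg (mul_nonneg (mul_nonneg hL.le hR0.le) hR0.le)
          (show (0:ℝ) ≤ (n:ℝ) ^ 2 - 1 by nlinarith)]
      linarith
    have h3 : 4 * (L * Rb) * (ε ^ 3 * r) ≤ t * (ε ^ 3 * r) := by linarith
    have h4 : 0 < ε ^ 3 * r := mul_pos (pow_pos hε0 3) hr
    exact le_of_mul_le_mul_right h3 h4
  have hLτ : L ≤ (1/4) * (t / Rb) := by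
    have e : (1/4) * (t / Rb) = t / (4 * Rb) := by ring
    rw [e, le_div_iff₀ (by positivity)]
    linarith
  have hτ0 : 0 < t / Rb := div_pos ht0 hRb0
  -- ===== xcp bounds =====
  have hxcp_app : ∀ i, xcp i = t / (c i + t / Rb) := fun i => by rw [hxcp]
  have hden : ∀ i, (3/4) * (t / Rb) ≤ c i + t / Rb ∧ c i + t / Rb ≤ (5/4) * (t / Rb) := by
    intro i
    have h1 := hcabs i
    rw [abs_le] at h1
    constructor <;> nlinarith [h1.1, h1.2]
  have hden0 : ∀ i, 0 < c i + t / Rb := fun i => lt_of_lt_of_le (by positivity) (hden i).1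
  have hτRb : t / Rb * Rb = t := div_mul_cancel₀ t hRb0.ne'
  have hxcp_ub : ∀ i, xcp i ≤ (4/3) * Rb := by
    intro i
    rw [hxcp_app i, div_le_iff₀ (hden0 i)]
    nlinarith [mul_nonneg hRb0.le (show (0:ℝ) ≤ c i + (1/4) * (t / Rb) by linarith [(hden i).1]), hτRb]
  have hxcp_lb : ∀ i, (4/5) * Rb ≤ xcp i := by
    intro i
    rw [hxcp_app i, le_div_iff₀ (hden0 i)]
    nlinarith [mul_nonneg hRb0.le (show (0:ℝ) ≤ (5/4) * (t / Rb) - (c i + t / Rb) by linarith [(hden i).2]), hτRb]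
  -- ===== xo bounds (minimum norm point) =====
  have hdet : IsUnit (A * Aᵀ).det := by
    have h1 : (A * Aᵀ).rank = d := by rw [Matrix.rank_self_mul_transpose, hA]
    have h2 : Function.Surjective (A * Aᵀ).mulVec := by
      have h3 : LinearMap.range (A * Aᵀ).mulVecLin = ⊤ := by
        apply Submodule.eq_top_of_finrank_eq
        rw [← Matrix.rank, h1, Module.finrank_pi]
        simp
      intro w
      exact LinearMap.mem_range.mp (h3 ▸ Submodule.mem_top (x := w) (R := ℝ))
    exact (Matrix.isUnit_iff_isUnit_det _).mp (Matrix.mulVec_surjective_iff_isUnit.mp h2)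
  have hxoA : A.mulVec xo = b := by
    rw [hxo, Matrix.mulVec_mulVec, Matrix.mulVec_mulVec, Matrix.mul_nonsing_inv _ hdet,
      Matrix.one_mulVec]
  have hxoR : ∀ i, |xo i| ≤ R := by
    have horto : ∑ i, xo i * (v i - xo i) = 0 := by
      have hz : A.mulVec (v - xo) = 0 := by rw [Matrix.mulVec_sub, hvA, hxoA, sub_self]
      have hxo' : xo = ((A * Aᵀ)⁻¹ *ᵥ b) ᵥ* A := by rw [hxo, Matrix.mulVec_transpose]
      have h2 : xo ⬝ᵥ (v - xo) = 0 := by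
        have h3 := congrArg (fun u => u ⬝ᵥ (v - xo)) hxo'
        rw [h3, ← Matrix.dotProduct_mulVec, hz, dotProduct_zero]
      calc ∑ i, xo i * (v i - xo i) = xo ⬝ᵥ (v - xo) := by
            simp [dotProduct, Pi.sub_apply]
      _ = 0 := h2
    have hsq : ∑ i, xo i ^ 2 ≤ ∑ i, v i ^ 2 := by
      have hexp : ∑ i, v i ^ 2
          = ∑ i, xo i ^ 2 + 2 * ∑ i, xo i * (v i - xo i) + ∑ i, (v i - xo i) ^ 2 := by
        rw [Finset.mul_sum, ← Finset.sum_add_distrib, ← Finset.sum_add_distrib]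
        exact Finset.sum_congr rfl (fun i _ => by ring)
      have hnn : 0 ≤ ∑ i, (v i - xo i) ^ 2 := Finset.sum_nonneg (fun i _ => sq_nonneg _)
      rw [hexp, horto]; linarith
    have hvR2 : ∑ i, v i ^ 2 ≤ R ^ 2 := by
      have h1 : 0 ≤ ∑ i, v i ^ 2 := Finset.sum_nonneg (fun i _ => sq_nonneg _)
      nlinarith [Real.sq_sqrt h1, Real.sqrt_nonneg (∑ i, v i ^ 2)]
    intro i
    have h1 : xo i ^ 2 ≤ ∑ j, xo j ^ 2 :=
      Finset.single_le_sum (fun j _ => sq_nonneg (xo j)) (Finset.mem_univ i)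
    have h2 := Real.sqrt_le_sqrt (show xo i ^ 2 ≤ R ^ 2 by linarith)
    rwa [Real.sqrt_sq_eq_abs, Real.sqrt_sq hR0.le] at h2
  -- ===== xcm, ctilde, btilde bounds =====
  have hxcm_app : ∀ i, xcm i = xcp i - xo i := fun i => by rw [hxcm]; rfl
  have hxcm_lb : ∀ i, (7/10) * Rb ≤ xcm i := by
    intro i
    have h1 := (abs_le.mp (hxoR i)).2
    rw [hxcm_app i]
    linarith [hxcp_lb i]
  have hxcm_ub : ∀ i, xcm i ≤ (3/2) * Rb := by
    intro i
    have h1 := (abs_le.mp (hxoR i)).1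
    rw [hxcm_app i]
    linarith [hxcp_ub i]
  have hxcm0 : ∀ i, 0 < xcm i := fun i => lt_of_lt_of_le (by positivity) (hxcm_lb i)
  have hct_app : ∀ i, ctilde i = t / xcm i := fun i => by rw [hct]
  have hct0 : ∀ i, 0 < ctilde i := fun i => by
    rw [hct_app i]; exact div_pos ht0 (hxcm0 i)
  have hct_id : ∀ i, ctilde i * xcm i = t := fun i => by
    rw [hct_app i]; exact div_mul_cancel₀ t (hxcm0 i).ne'
  have hbt_lb : (4/5) * ((n:ℝ) * Rb) + Rb ≤ btilde := by
    rw [hbt]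
    have := sumge xcp ((4/5) * Rb) hxcp_lb
    linarith
  have hbt_ub : btilde ≤ (4/3) * ((n:ℝ) * Rb) + Rb := by
    rw [hbt]
    have := sumle xcp ((4/3) * Rb) hxcp_ub
    linarith
  -- ===== dual identities =====
  have hsp_eq : ∀ i, sp i = c i + sθ - (Aᵀ.mulVec y) i := fun i => by
    have h1 := hdp i; linarith [hdθ]
  have hsm_eq : ∀ i, sm i = ctilde i + (Aᵀ.mulVec y) i := fun i => by
    have h1 := hdm i; linarith
  -- ===== orthogonality =====
  have orth2 : ∑ i, (Aᵀ.mulVec y) i * (xp i - xm i - v i) = 0 := by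
    have hz : A.mulVec (xp - xm - v) = 0 := by
      rw [Matrix.mulVec_sub, hPb, hvA, sub_self]
    have h2 : Aᵀ.mulVec y ⬝ᵥ (xp - xm - v) = 0 := by
      rw [Matrix.mulVec_transpose, ← Matrix.dotProduct_mulVec, hz, dotProduct_zero]
    calc ∑ i, (Aᵀ.mulVec y) i * (xp i - xm i - v i)
        = Aᵀ.mulVec y ⬝ᵥ (xp - xm - v) := by
          simp [dotProduct, Pi.sub_apply]
    _ = 0 := h2
  -- ===== master identity =====
  have hKey : (∑ i, ctilde i * xm i) + (∑ i, v i * sp i) - sθ * (∑ i, v i)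
      - (∑ i, xp i * sp i) - (∑ i, xm i * sm i) - (∑ i, c i * v i)
      + (∑ i, c i * xp i) + sθ * (∑ i, xp i) = 0 := by
    have h0 : ∀ i, ctilde i * xm i + v i * sp i - sθ * v i - xp i * sp i - xm i * sm i
        - c i * v i + c i * xp i + sθ * xp i = (Aᵀ.mulVec y) i * (xp i - xm i - v i) :=
      fun i => by rw [hsp_eq i, hsm_eq i]; ring
    have h1 : ∑ i, (ctilde i * xm i + v i * sp i - sθ * v i - xp i * sp i - xm i * sm i
        - c i * v i + c i * xp i + sθ * xp i)
        = ∑ i, (Aᵀ.mulVec y) i * (xp i - xm i - v i) :=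
      Finset.sum_congr rfl (fun i _ => h0 i)
    rw [orth2] at h1
    simp only [Finset.sum_add_distrib, Finset.sum_sub_distrib, ← Finset.mul_sum] at h1
    linarith
  have hMfinal : (∑ i, ctilde i * xm i) + (∑ i, v i * sp i) + sθ * (btilde - ∑ i, v i)
      = (∑ i, xp i * sp i) + (∑ i, xm i * sm i) + xθ * sθ
        + (∑ i, c i * v i) - (∑ i, c i * xp i) := by
    linear_combination hKey - sθ * hPsum
  -- ===== sum bounds =====
  have hS1 : (∑ i, xp i * sp i) ≤ (n:ℝ) * (7 * L * R / 6) :=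
    sumle _ _ (fun i => (hpp i).2)
  have hS2 : (∑ i, xm i * sm i) ≤ (n:ℝ) * (7 * L * R / 6) :=
    sumle _ _ (fun i => (hpm i).2)
  have hScv : |∑ i, c i * v i| ≤ L * R := by
    have h1 := cs_abs c v
    have h2 : Real.sqrt (∑ i, c i ^ 2) * Real.sqrt (∑ i, v i ^ 2) ≤ L * R :=
      mul_le_mul hc hvs (Real.sqrt_nonneg _) hL.le
    linarith
  have hSv_ub : (∑ i, v i) ≤ (n:ℝ) * R := sumle _ _ hviR
  have hSv_nn : 0 ≤ ∑ i, v i := Finset.sum_nonneg (fun i _ => hvnn i)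
  have hSct_nn : 0 ≤ ∑ i, ctilde i * xm i :=
    Finset.sum_nonneg (fun i _ => (mul_pos (hct0 i) (hxm0 i)).le)
  have hSvsp_nn : 0 ≤ ∑ i, v i * sp i :=
    Finset.sum_nonneg (fun i _ => (mul_nonneg (hvnn i) (hsp0 i).le))
  have hSxm_nn : 0 ≤ ∑ i, xm i := Finset.sum_nonneg (fun i _ => (hxm0 i).le)
  have hnR : (n:ℝ) * (10 * R) ≤ (n:ℝ) * Rb := mul_le_mul_of_nonneg_left hRRb hn0R.le
  have hbtSv : Rb ≤ btilde - ∑ i, v i := by linarith only [hbt_lb, hSv_ub, hnR, mul_nonneg hn0R.le hRb0.le]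
  have hθterm_nn : 0 ≤ sθ * (btilde - ∑ i, v i) :=
    mul_nonneg hsθ0.le (by linarith)
  -- ===== Stage A : rough bounds =====
  have hm1 := mul_le_mul_of_nonneg_right hε hnM0.le
  have hm2 := mul_le_mul_of_nonneg_right hε hM0.le
  have hLbt_e : ε * L * ((4/3) * ((n:ℝ) * Rb) + Rb)
      = (20/3) * ((n:ℝ) * (L * R)) + 5 * (L * R) := by
    linear_combination ((4/3) * ((n:ℝ) * L) + L) * hεRb
  have hLbt : ε * (L * btilde) ≤ (20/3) * ((n:ℝ) * (L * R)) + 5 * (L * R) := by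
    have h1 := mul_le_mul_of_nonneg_left hbt_ub (mul_nonneg hε0.le hL.le)
    nlinarith only [h1, hLbt_e]
  have hScxp_lbA : -(L * btilde) ≤ ∑ i, c i * xp i := by
    have h2 : ∑ i, -L * xp i ≤ ∑ i, c i * xp i :=
      Finset.sum_le_sum (fun i _ =>
        mul_le_mul_of_nonneg_right (neg_le_of_abs_le (hcabs i)) (hxp0 i).le)
    rw [← Finset.mul_sum] at h2
    have h3 : (∑ i, xp i) ≤ btilde := by linarith only [hPsum, hxθ0]
    nlinarith only [h2, mul_le_mul_of_nonneg_left h3 hL.le]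
  have hMboundA : (∑ i, ctilde i * xm i) + (∑ i, v i * sp i) + sθ * (btilde - ∑ i, v i)
      ≤ (7/3) * ((n:ℝ) * (L * R)) + (13/6) * (L * R) + L * btilde := by
    have habs := (abs_le.mp hScv).2
    linarith only [hMfinal, hS1, hS2, hpθ.2, habs, hScxp_lbA]
  have hKA : ε * ((∑ i, ctilde i * xm i) + (∑ i, v i * sp i) + sθ * (btilde - ∑ i, v i))
      ≤ 14 * ((n:ℝ) * (L * R)) := by
    have h1 := mul_le_mul_of_nonneg_left hMboundA hε0.le
    have h2 : ε * ((7/3) * ((n:ℝ) * (L * R)) + (13/6) * (L * R) + L * btilde)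
        = (7/3) * (ε * ((n:ℝ) * (L * R))) + (13/6) * (ε * (L * R)) + ε * (L * btilde) := by
      ring
    rw [h2] at h1
    linarith only [h1, hm1, hm2, hLbt, hMnM, hnM0]
  have hεSvsp : ∀ i, ε * (r * sp i) ≤ 14 * ((n:ℝ) * (L * R)) := by
    intro i
    have h1 : v i * sp i ≤ ∑ j, v j * sp j :=
      Finset.single_le_sum (fun j _ => mul_nonneg (hvnn j) (hsp0 j).le) (Finset.mem_univ i)
    have h2 : r * sp i ≤ v i * sp i := mul_le_mul_of_nonneg_right (hvr i) (hsp0 i).le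
    have h3 : r * sp i ≤ (∑ j, ctilde j * xm j) + (∑ j, v j * sp j)
        + sθ * (btilde - ∑ j, v j) := by
      linarith only [h1, h2, hSct_nn, hθterm_nn]
    have h4 := mul_le_mul_of_nonneg_left h3 hε0.le
    linarith only [h4, hKA]
  have hεctxm : ∀ i, ε * (ctilde i * xm i) ≤ 14 * ((n:ℝ) * (L * R)) := by
    intro i
    have h1 : ctilde i * xm i ≤ ∑ j, ctilde j * xm j :=
      Finset.single_le_sum (fun j _ => (mul_pos (hct0 j) (hxm0 j)).le) (Finset.mem_univ i)
    have h3 : ctilde i * xm i ≤ (∑ j, ctilde j * xm j) + (∑ j, v j * sp j)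
        + sθ * (btilde - ∑ j, v j) := by
      linarith only [h1, hSvsp_nn, hθterm_nn]
    have h4 := mul_le_mul_of_nonneg_left h3 hε0.le
    linarith only [h4, hKA]
  have hxpA : ∀ i, ε * (5 * L * R / 6) * r ≤ xp i * (14 * ((n:ℝ) * (L * R))) := by
    intro i
    have h1 := mul_le_mul_of_nonneg_left (hpp i).1 (mul_nonneg hε0.le hr.le)
    have h2 := mul_le_mul_of_nonneg_left (hεSvsp i) (hxp0 i).le
    nlinarith only [h1, h2]
  have htxmA : ∀ i, ε * (t * xm i) ≤ 21 * ((n:ℝ) * (L * R)) * Rb := by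
    intro i
    have he : ε * (t * xm i) = (ε * (ctilde i * xm i)) * xcm i := by
      rw [← hct_id i]; ring
    rw [he]
    have h1 : (ε * (ctilde i * xm i)) * xcm i ≤ (14 * ((n:ℝ) * (L * R))) * ((3/2) * Rb) :=
      mul_le_mul (hεctxm i) (hxcm_ub i) (hxcm0 i).le (by linarith only [hnM0])
    linarith only [h1]
  -- numeric comparison for stage A
  have hnum1 : (294 * (((n:ℝ) * (L * R)) ^ 2) * Rb) * ε
      = 1470 * (((n:ℝ) * (L * R)) ^ 2 * R) := by
    linear_combination (294 * ((n:ℝ) * (L * R)) ^ 2) * hεRb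
  have hnum2 : ((5/12) * ((L * R) * (t * ε ^ 2 * r))) * ε
      = (5/12) * 2 ^ 16 * (((n:ℝ) * (L * R)) ^ 2 * R) := by
    linear_combination ((5/12) * (L * R)) * hts
  have hnum3 : 1470 * (((n:ℝ) * (L * R)) ^ 2 * R)
      ≤ (5/12) * 2 ^ 16 * (((n:ℝ) * (L * R)) ^ 2 * R) := by
    nlinarith only [mul_nonneg (sq_nonneg ((n:ℝ) * (L * R))) hR0.le]
  have hnumA : 294 * (((n:ℝ) * (L * R)) ^ 2) * Rb ≤ (5/12) * ((L * R) * (t * ε ^ 2 * r)) := by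
    have h1 : (294 * (((n:ℝ) * (L * R)) ^ 2) * Rb) * ε
        ≤ ((5/12) * ((L * R) * (t * ε ^ 2 * r))) * ε := by
      rw [hnum1, hnum2]; exact hnum3
    exact le_of_mul_le_mul_right h1 hε0
  have hxmA : ∀ i, xm i ≤ (1/2) * xp i := by
    intro i
    have c1 : (0:ℝ) ≤ 14 * ((n:ℝ) * (L * R)) := by linarith only [hnM0]
    have hA1 := mul_le_mul_of_nonneg_right (htxmA i) c1
    have hA2 := mul_le_mul_of_nonneg_left (hxpA i)
      (show (0:ℝ) ≤ (1/2) * (ε * t) by positivity)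
    have hP : ε * (t * xm i) * (14 * ((n:ℝ) * (L * R)))
        ≤ ((1/2) * (ε * (t * xp i))) * (14 * ((n:ℝ) * (L * R))) := by
      nlinarith only [hA1, hA2, hnumA]
    have hP2 : ε * (t * xm i) ≤ (1/2) * (ε * (t * xp i)) :=
      le_of_mul_le_mul_right hP (by nlinarith only [hnM0])
    nlinarith only [hP2, mul_pos hε0 ht0, hxp0 i, hxm0 i]
  -- ===== Stage B : refined bounds =====
  have hdnn : ∀ i, 0 ≤ xp i - xm i := fun i => by linarith only [hxmA i, hxp0 i]
  have hdnn' : ∀ i, 0 ≤ (xp - xm) i := fun i => by rw [Pi.sub_apply]; exact hdnn i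
  have hdR : Real.sqrt (∑ i, (xp i - xm i) ^ 2) ≤ R := by
    have h1 := hR (xp - xm) hPb hdnn'
    have e : ∑ i, ((xp - xm) i) ^ 2 = ∑ i, (xp i - xm i) ^ 2 :=
      Finset.sum_congr rfl (fun i _ => by rw [Pi.sub_apply])
    rwa [e] at h1
  have hScd : |∑ i, c i * (xp i - xm i)| ≤ L * R := by
    have h1 := cs_abs c (fun i => xp i - xm i)
    have h2 : Real.sqrt (∑ i, c i ^ 2) * Real.sqrt (∑ i, (xp i - xm i) ^ 2) ≤ L * R :=
      mul_le_mul hc hdR (Real.sqrt_nonneg _) hL.le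
    linarith only [h1, h2]
  have hSd_ub : ∑ i, (xp i - xm i) ≤ (n:ℝ) * R := by
    have h1 := cs_abs (fun _ : Fin n => (1:ℝ)) (fun i => xp i - xm i)
    have e1 : ∑ i : Fin n, (1:ℝ) * (xp i - xm i) = ∑ i, (xp i - xm i) :=
      Finset.sum_congr rfl (fun i _ => one_mul _)
    have e2 : ∑ _i : Fin n, (1:ℝ) ^ 2 = (n:ℝ) := by simp
    rw [e1, e2] at h1
    have h3 : Real.sqrt (n:ℝ) ≤ (n:ℝ) := by
      have h4 := Real.sqrt_le_sqrt (show (n:ℝ) ≤ (n:ℝ) ^ 2 by nlinarith only [hn1])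
      rwa [Real.sqrt_sq hn0R.le] at h4
    have h5 : Real.sqrt (n:ℝ) * Real.sqrt (∑ i, (xp i - xm i) ^ 2) ≤ (n:ℝ) * R :=
      mul_le_mul h3 hdR (Real.sqrt_nonneg _) hn0R.le
    have h6 := (abs_le.mp h1).2
    linarith only [h5, h6]
  have hSxmtA : ε * (t * (∑ i, xm i)) ≤ (n:ℝ) * (21 * ((n:ℝ) * (L * R)) * Rb) := by
    have h1 := sumle (fun i => ε * (t * xm i)) (21 * ((n:ℝ) * (L * R)) * Rb) htxmA
    have e : ∑ i, ε * (t * xm i) = ε * (t * ∑ i, xm i) := by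
      rw [← Finset.mul_sum, ← Finset.mul_sum]
    rw [e] at h1
    exact h1
  have hSxmA : (∑ i, xm i) ≤ (1/100) * r := by
    have hq1 : ((n:ℝ) * (21 * ((n:ℝ) * (L * R)) * Rb)) * ε ^ 2
        = 105 * ((n:ℝ) ^ 2 * (L * R) * R) * ε := by
      linear_combination (21 * (n:ℝ) ^ 2 * (L * R) * ε) * hεRb
    have hq2 : (t * ε ^ 3) * ((1/100) * r) = (1/100) * (2 ^ 16 * (n:ℝ) ^ 2 * L * R ^ 2) := by
      linear_combination (1/100) * hts
    have hq3 : 105 * ((n:ℝ) ^ 2 * (L * R) * R) * ε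
        ≤ (1/100) * (2 ^ 16 * (n:ℝ) ^ 2 * L * R ^ 2) := by
      nlinarith only [mul_nonneg (mul_nonneg (mul_nonneg (sq_nonneg (n:ℝ)) hM0.le) hR0.le)
        (show (0:ℝ) ≤ 1/2 - ε by linarith only [hε]),
        mul_nonneg (mul_nonneg (sq_nonneg (n:ℝ)) hM0.le) hR0.le]
    have h2 := mul_le_mul_of_nonneg_right hSxmtA (sq_nonneg ε)
    have h3 : (t * ε ^ 3) * (∑ i, xm i) ≤ (t * ε ^ 3) * ((1/100) * r) := by
      nlinarith only [h2, hq1, hq2, hq3]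
    exact le_of_mul_le_mul_left h3 (mul_pos ht0 (pow_pos hε0 3))
  have hScxm : |∑ i, c i * xm i| ≤ L * ((1/100) * r) := by
    have h1 : |∑ i, c i * xm i| ≤ ∑ i, |c i * xm i| := Finset.abs_sum_le_sum_abs _ _
    have h2 : ∑ i, |c i * xm i| ≤ ∑ i, L * xm i := Finset.sum_le_sum (fun i _ => by
      rw [abs_mul, abs_of_pos (hxm0 i)]
      exact mul_le_mul_of_nonneg_right (hcabs i) (hxm0 i).le)
    rw [← Finset.mul_sum] at h2
    have h3 : L * (∑ i, xm i) ≤ L * ((1/100) * r) := mul_le_mul_of_nonneg_left hSxmA hL.le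
    linarith only [h1, h2, h3]
  have hScxpB : -(∑ i, c i * xp i) ≤ L * R + L * ((1/100) * r) := by
    have e : ∑ i, c i * xp i = (∑ i, c i * (xp i - xm i)) + ∑ i, c i * xm i := by
      rw [← Finset.sum_add_distrib]; exact Finset.sum_congr rfl (fun i _ => by ring)
    have h1 := (abs_le.mp hScd).1
    have h2 := (abs_le.mp hScxm).1
    linarith only [e, h1, h2]
  have hLr : L * ((1/100) * r) ≤ (1/100) * (L * R) := by
    nlinarith only [mul_nonneg hL.le (sub_nonneg.mpr hrR)]
  have hKB : (∑ i, ctilde i * xm i) + (∑ i, v i * sp i) + sθ * (btilde - ∑ i, v i)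
      ≤ 6 * ((n:ℝ) * (L * R)) := by
    have habs := (abs_le.mp hScv).2
    linarith only [hMfinal, hS1, hS2, hpθ.2, habs, hScxpB, hLr, hMnM, hnM0]
  have hspB : ∀ i, r * sp i ≤ 6 * ((n:ℝ) * (L * R)) := by
    intro i
    have h1 : v i * sp i ≤ ∑ j, v j * sp j :=
      Finset.single_le_sum (fun j _ => mul_nonneg (hvnn j) (hsp0 j).le) (Finset.mem_univ i)
    have h2 : r * sp i ≤ v i * sp i := mul_le_mul_of_nonneg_right (hvr i) (hsp0 i).le
    linarith only [h1, h2, hSct_nn, hθterm_nn, hKB]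
  have hxpB : ∀ i, (5 * L * R / 6) * r ≤ xp i * (6 * ((n:ℝ) * (L * R))) := by
    intro i
    have h1 := mul_le_mul_of_nonneg_left (hpp i).1 hr.le
    have h2 := mul_le_mul_of_nonneg_left (hspB i) (hxp0 i).le
    nlinarith only [h1, h2]
  have hctxmB : ∀ i, ctilde i * xm i ≤ 6 * ((n:ℝ) * (L * R)) := by
    intro i
    have h1 : ctilde i * xm i ≤ ∑ j, ctilde j * xm j :=
      Finset.single_le_sum (fun j _ => (mul_pos (hct0 j) (hxm0 j)).le) (Finset.mem_univ i)
    linarith only [h1, hSvsp_nn, hθterm_nn, hKB]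
  have htxmB : ∀ i, t * xm i ≤ 6 * ((n:ℝ) * (L * R)) * ((3/2) * Rb) := by
    intro i
    have he : t * xm i = (ctilde i * xm i) * xcm i := by rw [← hct_id i]; ring
    rw [he]
    exact mul_le_mul (hctxmB i) (hxcm_ub i) (hxcm0 i).le (by linarith only [hnM0])
  -- numeric comparison for stage B
  have hnB1 : (54 * (((n:ℝ) * (L * R)) ^ 2) * Rb) * ε ^ 2
      = 270 * (((n:ℝ) * (L * R)) ^ 2 * R) * ε := by
    linear_combination (54 * ((n:ℝ) * (L * R)) ^ 2 * ε) * hεRb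
  have hnB2 : ((5/6) * ((L * R) * (t * r)) * ε) * ε ^ 2
      = (5/6) * 2 ^ 16 * (((n:ℝ) * (L * R)) ^ 2 * R) := by
    linear_combination ((5/6) * (L * R)) * hts
  have hnB3 : 270 * (((n:ℝ) * (L * R)) ^ 2 * R) * ε
      ≤ (5/6) * 2 ^ 16 * (((n:ℝ) * (L * R)) ^ 2 * R) := by
    nlinarith only [mul_nonneg (mul_nonneg (sq_nonneg ((n:ℝ) * (L * R))) hR0.le)
      (show (0:ℝ) ≤ 1/2 - ε by linarith only [hε]),
      mul_nonneg (sq_nonneg ((n:ℝ) * (L * R))) hR0.le]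
  have hnumB : 54 * (((n:ℝ) * (L * R)) ^ 2) * Rb ≤ (5/6) * ((L * R) * (t * r)) * ε := by
    have h1 : (54 * (((n:ℝ) * (L * R)) ^ 2) * Rb) * ε ^ 2
        ≤ ((5/6) * ((L * R) * (t * r)) * ε) * ε ^ 2 := by
      rw [hnB1, hnB2]; exact hnB3
    exact le_of_mul_le_mul_right h1 (pow_pos hε0 2)
  have hGOAL3 : ∀ i, xm i ≤ ε * xp i := by
    intro i
    have c2 : (0:ℝ) ≤ 6 * ((n:ℝ) * (L * R)) := by linarith only [hnM0]
    have hB1 := mul_le_mul_of_nonneg_right (htxmB i) c2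
    have hB2 := mul_le_mul_of_nonneg_left (hxpB i) (mul_nonneg hε0.le ht0.le)
    have hP : (t * xm i) * (6 * ((n:ℝ) * (L * R)))
        ≤ (ε * (t * xp i)) * (6 * ((n:ℝ) * (L * R))) := by
      nlinarith only [hB1, hB2, hnumB]
    have hP2 : t * xm i ≤ ε * (t * xp i) :=
      le_of_mul_le_mul_right hP (by nlinarith only [hnM0])
    nlinarith only [hP2, ht0, hxp0 i, hxm0 i]
  -- xθ lower bound and final goal
  have hSxp_split : ∑ i, xp i = (∑ i, (xp i - xm i)) + ∑ i, xm i := by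
    rw [← Finset.sum_add_distrib]; exact Finset.sum_congr rfl (fun i _ => by ring)
  have hSxpB : ∑ i, xp i ≤ (101/100) * ((n:ℝ) * R) := by
    have h1 : (1/100) * r ≤ (1/100) * ((n:ℝ) * R) := by
      nlinarith only [hrR, mul_nonneg hR0.le (show (0:ℝ) ≤ (n:ℝ) - 1 by linarith only [hn1])]
    linarith only [hSxp_split, hSd_ub, hSxmA, h1]
  have hxθB : (69/100) * ((n:ℝ) * Rb) ≤ xθ := by
    linarith only [hPsum, hbt_lb, hSxpB, hnR, hRb0, mul_nonneg hn0R.le hRb0.le]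
  have hxpubB : ∀ i, xp i ≤ (101/100) * ((n:ℝ) * R) := fun i => by
    have h1 : xp i ≤ ∑ j, xp j :=
      Finset.single_le_sum (fun j _ => (hxp0 j).le) (Finset.mem_univ i)
    linarith only [h1, hSxpB]
  have hGOAL4 : ∀ i, sθ ≤ ε * sp i := by
    intro i
    have e1 : sθ * ((69/100) * ((n:ℝ) * Rb)) ≤ (7/6) * (L * R) := by
      have h1 := mul_le_mul_of_nonneg_left hxθB hsθ0.le
      nlinarith only [h1, hpθ.2]
    have e2 : (5/6) * (L * R) ≤ sp i * ((101/100) * ((n:ℝ) * R)) := by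
      have h1 := mul_le_mul_of_nonneg_left (hxpubB i) (hsp0 i).le
      nlinarith only [h1, (hpp i).1]
    have e3 : ε * ((n:ℝ) * Rb) = 5 * ((n:ℝ) * R) := by linear_combination (n:ℝ) * hεRb
    nlinarith only [e1, e2, e3, mul_pos hn0R hRb0, hsp0 i, hsθ0, hM0]
  have hGOAL2b : ∀ i, 0 ≤ sp i - sθ := fun i => by
    nlinarith only [hGOAL4 i, hsp0 i,
      mul_nonneg (hsp0 i).le (show (0:ℝ) ≤ 1 - ε by linarith only [hε])]
  exact ⟨⟨hPb, hdnn⟩, ⟨⟨y, hspi⟩, hGOAL2b⟩, hGOAL3, hGOAL4⟩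
end

section
/- Suppose P is nonempty and ‖x‖₂ ≤ R for all x ∈ P. Suppose x* ∈ P is the unique minimizer of cᵀx over P, and there are constants L > 0 and η > 0 such that every extreme point (vertex) x of P with x ≠ x* satisfies cᵀx ≥ cᵀx* + ηLR. Then for any 0 ≤ δ ≤ η and any x ∈ P with cᵀx ≤ cᵀx* + δLR, one has ‖x − x*‖₂ ≤ 2δR/η. -/
open Matrix Finset

noncomputable def eN (n : ℕ) (y : Fin n → ℝ) : ℝ :=
  ‖(WithLp.linearEquiv 2 ℝ (Fin n → ℝ)).symm y‖

lemma eN_eq {n : ℕ} (y : Fin n → ℝ) : eN n y = Real.sqrt (∑ i, (y i) ^ 2) := by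
  rw [eN, EuclideanSpace.norm_eq]
  congr 1
  apply Finset.sum_congr rfl
  intro i _
  rw [Real.norm_eq_abs, sq_abs]
  rfl

lemma eN_nonneg {n : ℕ} (y : Fin n → ℝ) : 0 ≤ eN n y := norm_nonneg _

lemma eN_sub_le {n : ℕ} (y z : Fin n → ℝ) : eN n (y - z) ≤ eN n y + eN n z := by
  simpa [eN, map_sub] using norm_sub_le ((WithLp.linearEquiv 2 ℝ (Fin n → ℝ)).symm y)
    ((WithLp.linearEquiv 2 ℝ (Fin n → ℝ)).symm z)

lemma eN_sum_le {n : ℕ} {ι : Type} (t : Finset ι) (f : ι → (Fin n → ℝ)) :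
    eN n (∑ i ∈ t, f i) ≤ ∑ i ∈ t, eN n (f i) := by
  simpa [eN, map_sum] using norm_sum_le t
    (fun i => (WithLp.linearEquiv 2 ℝ (Fin n → ℝ)).symm (f i))

lemma eN_add_le {n : ℕ} (y z : Fin n → ℝ) : eN n (y + z) ≤ eN n y + eN n z := by
  simpa [eN, map_add] using norm_add_le ((WithLp.linearEquiv 2 ℝ (Fin n → ℝ)).symm y)
    ((WithLp.linearEquiv 2 ℝ (Fin n → ℝ)).symm z)

lemma eN_smul {n : ℕ} (a : ℝ) (y : Fin n → ℝ) : eN n (a • y) = |a| * eN n y := by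
  simp [eN, _root_.map_smul, norm_smul, Real.norm_eq_abs]

/-- If `x*` is the unique minimizer of `cᵀx` over the polyhedron
`P = {x : Ax = b, x ≥ 0}`, `‖x‖₂ ≤ R` on `P`, and every other vertex (extreme point)
of `P` has cost at least `cᵀx* + ηLR`, then any `x ∈ P` with
`cᵀx ≤ cᵀx* + δLR` (for `0 ≤ δ ≤ η`) satisfies `‖x − x*‖₂ ≤ 2δR/η`. -/
theorem near_optimal_near_vertex {d n : ℕ}
    (A : Matrix (Fin d) (Fin n) ℝ) (b : Fin d → ℝ) (c : Fin n → ℝ)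
    (R L η : ℝ) (hL : 0 < L) (hη : 0 < η)
    (hP : {x : Fin n → ℝ | A.mulVec x = b ∧ ∀ i, 0 ≤ x i}.Nonempty)
    (hR : ∀ x : Fin n → ℝ, A.mulVec x = b → (∀ i, 0 ≤ x i) →
      Real.sqrt (∑ i, (x i) ^ 2) ≤ R)
    (xstar : Fin n → ℝ)
    (hxstar : A.mulVec xstar = b ∧ ∀ i, 0 ≤ xstar i)
    (hmin : ∀ x : Fin n → ℝ, A.mulVec x = b → (∀ i, 0 ≤ x i) → x ≠ xstar →
      c ⬝ᵥ xstar < c ⬝ᵥ x)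
    (hvert : ∀ x ∈ Set.extremePoints ℝ
        {x : Fin n → ℝ | A.mulVec x = b ∧ ∀ i, 0 ≤ x i},
      x ≠ xstar → c ⬝ᵥ xstar + η * L * R ≤ c ⬝ᵥ x)
    (δ : ℝ) (hδ0 : 0 ≤ δ) (hδη : δ ≤ η)
    (x : Fin n → ℝ) (hx : A.mulVec x = b ∧ ∀ i, 0 ≤ x i)
    (hval : c ⬝ᵥ x ≤ c ⬝ᵥ xstar + δ * L * R) :
    Real.sqrt (∑ i, (x i - xstar i) ^ 2) ≤ 2 * δ * R / η := by
  set S : Set (Fin n → ℝ) := {x : Fin n → ℝ | A.mulVec x = b ∧ ∀ i, 0 ≤ x i} with hS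
  -- R is nonnegative
  have hR0 : 0 ≤ R := by
    obtain ⟨y, hy⟩ := hP
    exact le_trans (Real.sqrt_nonneg _) (hR y hy.1 hy.2)
  -- Euclidean norm bound on S
  have hNS : ∀ y ∈ S, eN n y ≤ R := fun y hy => (eN_eq y) ▸ hR y hy.1 hy.2
  -- goal restated with eN
  rw [← eN_eq]
  show eN n (x - xstar) ≤ 2 * δ * R / η
  -- trivial case R = 0
  rcases eq_or_lt_of_le hR0 with hR0' | hRpos
  · have hx0 : eN n (x - xstar) = 0 := by
      have h1 := hNS x hx
      have h2 := hNS xstar hxstar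
      rw [← hR0'] at h1 h2
      have := eN_sub_le x xstar
      have hnn := eN_nonneg (x - xstar)
      nlinarith
    rw [hx0]
    positivity
  -- sup-norm boundedness and closedness of S, hence compactness
  have hSconv : Convex ℝ S := by
    rintro y ⟨hy1, hy2⟩ z ⟨hz1, hz2⟩ a b' ha hb hab
    constructor
    · rw [Matrix.mulVec_add, Matrix.mulVec_smul, Matrix.mulVec_smul, hy1, hz1,
        ← add_smul, hab, one_smul]
    · intro i
      have : (a • y + b' • z) i = a * y i + b' * z i := rfl
      rw [this]
      exact add_nonneg (mul_nonneg ha (hy2 i)) (mul_nonneg hb (hz2 i))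
  have hSclosed : IsClosed S := by
    have h1 : IsClosed {y : Fin n → ℝ | A.mulVec y = b} := by
      apply isClosed_eq _ continuous_const
      refine continuous_pi fun j => ?_
      simp only [Matrix.mulVec, dotProduct]
      exact continuous_finset_sum _ fun k _ => (continuous_const.mul (continuous_apply k))
    have h2 : IsClosed {y : Fin n → ℝ | ∀ i, 0 ≤ y i} := by
      have : {y : Fin n → ℝ | ∀ i, 0 ≤ y i} = ⋂ i, {y | 0 ≤ y i} := by
        ext y; simp
      rw [this]
      exact isClosed_iInter fun i => isClosed_le continuous_const (continuous_apply i)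
    exact h1.inter h2
  have hSbdd : Bornology.IsBounded S := by
    rw [Metric.isBounded_iff_subset_closedBall 0]
    refine ⟨R, fun y hy => ?_⟩
    rw [Metric.mem_closedBall, dist_zero_right]
    rw [pi_norm_le_iff_of_nonneg hR0]
    intro i
    rw [Real.norm_eq_abs, ← Real.sqrt_sq_eq_abs]
    refine le_trans (Real.sqrt_le_sqrt ?_) ((eN_eq y) ▸ hNS y hy)
    exact Finset.single_le_sum (f := fun i => (y i)^2) (fun j _ => sq_nonneg _) (Finset.mem_univ i)
  have hScomp : IsCompact S := Metric.isCompact_of_isClosed_isBounded hSclosed hSbdd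
  -- Krein–Milman
  have hKM : closure (convexHull ℝ (S.extremePoints ℝ)) = S :=
    closure_convexHull_extremePoints hScomp hSconv
  -- the cost functional as a linear map
  let ℓ : (Fin n → ℝ) →ₗ[ℝ] ℝ :=
    { toFun := fun y => c ⬝ᵥ y
      map_add' := fun y z => dotProduct_add c y z
      map_smul' := fun a y => by
        simp [dotProduct_smul, smul_eq_mul] }
  have hℓ : ∀ y, ℓ y = c ⬝ᵥ y := fun _ => rfl
  -- constant K bounding the Lipschitz constant of ℓ in sup norm
  set K : ℝ := ∑ i, |c i| with hK
  have hK0 : 0 ≤ K := Finset.sum_nonneg fun i _ => abs_nonneg _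
  have hℓLip : ∀ y z : Fin n → ℝ, |ℓ y - ℓ z| ≤ K * dist y z := by
    intro y z
    have : ℓ y - ℓ z = ∑ i, c i * (y i - z i) := by
      simp [hℓ, dotProduct, Finset.sum_sub_distrib, mul_sub]
    rw [this]
    refine le_trans (Finset.abs_sum_le_sum_abs _ _) ?_
    rw [hK, Finset.sum_mul]
    refine Finset.sum_le_sum fun i _ => ?_
    rw [abs_mul]
    refine mul_le_mul_of_nonneg_left ?_ (abs_nonneg _)
    calc |y i - z i| = dist (y i) (z i) := (Real.dist_eq _ _).symm
      _ ≤ dist y z := dist_le_pi_dist y z i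
  -- main estimate: for every ε > 0
  have main : ∀ ε : ℝ, 0 < ε →
      eN n (x - xstar) ≤ 2 * δ * R / η + (Real.sqrt n + 2 * K / (η * L)) * ε := by
    intro ε hε
    -- find y in the convex hull of extreme points close to x
    have hxS : x ∈ S := hx
    have hxcl : x ∈ closure (convexHull ℝ (S.extremePoints ℝ)) := by
      rw [hKM]; exact hxS
    obtain ⟨y, hy, hyx⟩ := Metric.mem_closure_iff.1 hxcl ε hε
    rw [_root_.convexHull_eq] at hy
    obtain ⟨ι, t, w, z, hw0, hw1, hzt, hcm⟩ := hy
    have hy_eq : y = ∑ i ∈ t, w i • z i := by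
      rw [← hcm, Finset.centerMass_eq_of_sum_1 _ _ hw1]
    -- each z i is in S
    have hzS : ∀ i ∈ t, z i ∈ S := fun i hi => (extremePoints_subset (hzt i hi))
    -- weight on non-xstar vertices
    set μ : ℝ := ∑ i ∈ t.filter (fun i => z i ≠ xstar), w i with hμ
    have hμ0 : 0 ≤ μ := Finset.sum_nonneg fun i hi => hw0 i (Finset.mem_of_mem_filter i hi)
    -- cost lower bound
    have hcost : c ⬝ᵥ xstar + μ * (η * L * R) ≤ c ⬝ᵥ y := by
      have h1 : c ⬝ᵥ y = ∑ i ∈ t, w i * (c ⬝ᵥ z i) := by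
        rw [← hℓ, hy_eq, map_sum]
        exact Finset.sum_congr rfl fun i _ => by simp [hℓ]
      have h2 : ∀ i ∈ t, w i * (c ⬝ᵥ xstar + (if z i = xstar then 0 else η * L * R))
          ≤ w i * (c ⬝ᵥ z i) := by
        intro i hi
        refine mul_le_mul_of_nonneg_left ?_ (hw0 i hi)
        by_cases hzi : z i = xstar
        · simp [hzi]
        · simp only [hzi, if_false]
          exact hvert (z i) (hzt i hi) hzi
      have h3 : ∑ i ∈ t, w i * (c ⬝ᵥ xstar + (if z i = xstar then 0 else η * L * R))
          = c ⬝ᵥ xstar + μ * (η * L * R) := by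
        simp only [mul_add]
        rw [Finset.sum_add_distrib, ← Finset.sum_mul, hw1, one_mul]
        congr 1
        rw [hμ, Finset.sum_mul, Finset.sum_filter]
        refine Finset.sum_congr rfl fun i _ => ?_
        by_cases hzi : z i = xstar <;> simp [hzi]
      rw [h1, ← h3]
      exact Finset.sum_le_sum h2
    -- cost of y vs cost of x
    have hcy : c ⬝ᵥ y ≤ c ⬝ᵥ xstar + δ * L * R + K * ε := by
      have := hℓLip y x
      have habs : ℓ y - ℓ x ≤ K * dist y x := le_trans (le_abs_self _) this
      have hdist : K * dist y x ≤ K * ε := by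
        rw [dist_comm]
        exact mul_le_mul_of_nonneg_left (le_of_lt hyx) hK0
      simp only [hℓ] at habs
      linarith
    -- bound on μ
    have hμle : μ ≤ δ / η + K * ε / (η * L * R) := by
      have h1 : μ * (η * L * R) ≤ δ * L * R + K * ε := by linarith
      have h2 : 0 < η * L * R := by positivity
      rw [div_add_div _ _ (ne_of_gt hη) (ne_of_gt (by positivity : (0:ℝ) < η * L * R))]
      rw [le_div_iff₀ (by positivity)]
      have : δ * (η * L * R) + η * (K * ε) = (δ * L * R + K * ε) * η := by ring
      calc μ * (η * (η * L * R)) = (μ * (η * L * R)) * η := by ring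
        _ ≤ (δ * L * R + K * ε) * η := mul_le_mul_of_nonneg_right h1 (le_of_lt hη)
        _ = δ * (η * L * R) + η * (K * ε) := by ring
    -- norm bound on y - xstar
    have hNy : eN n (y - xstar) ≤ 2 * R * μ := by
      have hyd : y - xstar = ∑ i ∈ t, w i • (z i - xstar) := by
        rw [hy_eq]
        rw [Finset.sum_congr rfl fun i _ => smul_sub (w i) (z i) xstar]
        rw [Finset.sum_sub_distrib, ← Finset.sum_smul, hw1, one_smul]
      rw [hyd]
      refine le_trans (eN_sum_le t _) ?_
      have hterm : ∀ i ∈ t, eN n (w i • (z i - xstar))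
          ≤ w i * (if z i = xstar then 0 else 2 * R) := by
        intro i hi
        rw [eN_smul, abs_of_nonneg (hw0 i hi)]
        refine mul_le_mul_of_nonneg_left ?_ (hw0 i hi)
        by_cases hzi : z i = xstar
        · simp [hzi, eN_eq]
        · simp only [hzi, if_false]
          refine le_trans (eN_sub_le _ _) ?_
          have := hNS (z i) (hzS i hi)
          have := hNS xstar hxstar
          linarith
      refine le_trans (Finset.sum_le_sum hterm) ?_
      have : ∑ i ∈ t, w i * (if z i = xstar then 0 else 2 * R) = μ * (2 * R) := by
        rw [hμ, Finset.sum_mul, Finset.sum_filter]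
        refine Finset.sum_congr rfl fun i _ => ?_
        by_cases hzi : z i = xstar <;> simp [hzi]
      rw [this]; exact le_of_eq (by ring)
    -- norm bound on x - y
    have hNxy : eN n (x - y) ≤ Real.sqrt n * ε := by
      rw [eN_eq]
      have h1 : ∑ i, ((x - y) i) ^ 2 ≤ (n : ℝ) * ε ^ 2 := by
        calc ∑ i, ((x - y) i) ^ 2 ≤ ∑ _i : Fin n, ε ^ 2 := by
              refine Finset.sum_le_sum fun i _ => ?_
              have : |(x - y) i| ≤ ε := by
                have h := dist_le_pi_dist x y i
                have : dist x y < ε := hyx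
                calc |(x - y) i| = dist (x i) (y i) := by
                      rw [Real.dist_eq]; rfl
                  _ ≤ dist x y := dist_le_pi_dist x y i
                  _ ≤ ε := le_of_lt this
              calc ((x - y) i) ^ 2 = |(x - y) i| ^ 2 := (sq_abs _).symm
                _ ≤ ε ^ 2 := by nlinarith [abs_nonneg ((x-y) i)]
          _ = (n : ℝ) * ε ^ 2 := by simp [mul_comm]
      calc Real.sqrt (∑ i, ((x - y) i) ^ 2) ≤ Real.sqrt ((n : ℝ) * ε ^ 2) :=
            Real.sqrt_le_sqrt h1
        _ = Real.sqrt n * ε := by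
            rw [Real.sqrt_mul (Nat.cast_nonneg n), Real.sqrt_sq (le_of_lt hε)]
    -- combine
    have hsplit : eN n (x - xstar) ≤ eN n (x - y) + eN n (y - xstar) := by
      have h := eN_add_le (x - y) (y - xstar)
      rwa [sub_add_sub_cancel] at h
    have h2Rμ : 2 * R * μ ≤ 2 * R * (δ / η + K * ε / (η * L * R)) :=
      mul_le_mul_of_nonneg_left hμle (by positivity)
    have heq : 2 * R * (δ / η + K * ε / (η * L * R)) = 2 * δ * R / η + 2 * K / (η * L) * ε := by
      field_simp
    calc eN n (x - xstar) ≤ eN n (x - y) + eN n (y - xstar) := hsplit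
      _ ≤ Real.sqrt n * ε + 2 * R * μ := add_le_add hNxy hNy
      _ ≤ Real.sqrt n * ε + (2 * δ * R / η + 2 * K / (η * L) * ε) := by
          rw [← heq]; linarith
      _ = 2 * δ * R / η + (Real.sqrt n + 2 * K / (η * L)) * ε := by ring
  -- take ε → 0
  set C : ℝ := Real.sqrt n + 2 * K / (η * L) with hC
  have hC0 : 0 ≤ C := by positivity
  refine le_of_forall_pos_le_add fun ε' hε' => ?_
  have hden : 0 < C + 1 := by linarith
  have := main (ε' / (C + 1)) (by positivity)
  refine le_trans this ?_
  have : C * (ε' / (C + 1)) ≤ ε' := by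
    rw [mul_div_assoc'] at *
    rw [div_le_iff₀ hden]
    nlinarith
  linarith
end
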